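/- Let h : ℝⁿ → ℝ be convex and differentiable with L-Lipschitz gradient, L > 0. Let Y ⊆ ℝⁿ be nonempty closed convex and X* ⊆ Y nonempty closed convex. Let v ∈ ℝⁿ, set v̄ = Π_{X*}(v), and assume h(v̄) ≤ 0. Let β ∈ (0,1), and let B_h, M_h > 0 satisfy ‖∇h(v)‖ ≤ B_h and |h(v)| ≤ M_h; set 𝓑² = max(B_h², M_h·L). Define the SMBA feasibility step z = v − β·((h(v))₊/p_v)·∇h(v) (with division by zero interpreted as zero) and x⁺ = Π_Y(z). Then dist²(x⁺, X*) ≤ ‖v − v̄‖² − (2β(1 − β)/𝓑²)·((h(v))₊)². -/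

import Mathlib

set_option maxHeartbeats 1000000


open Metric

open scoped RealInnerProductSpace

/-- The center of the ball associated with the quadratic upper approximation
of `h` at `v` with parameter `L`: `c_v = v - (1/L) ∇h(v)`. -/
noncomputable def ballCenter {n : ℕ} (h : EuclideanSpace ℝ (Fin n) → ℝ) (L : ℝ)
    (v : EuclideanSpace ℝ (Fin n)) : EuclideanSpace ℝ (Fin n) :=
  v - (1 / L) • gradient h v

/-- The radius term `R_v = ‖∇h(v)‖²/L² - 2 h(v)/L`. -/
noncomputable def ballRadius {n : ℕ} (h : EuclideanSpace ℝ (Fin n) → ℝ) (L : ℝ)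
    (v : EuclideanSpace ℝ (Fin n)) : ℝ :=
  ‖gradient h v‖ ^ 2 / L ^ 2 - 2 * h v / L

/-- The adaptive parameter `p_v = ((h(v))₊ L) / (1 - √((R_v)₊)/‖v - c_v‖)`,
where division by zero is interpreted as zero (Lean's convention). -/
noncomputable def adaptP {n : ℕ} (h : EuclideanSpace ℝ (Fin n) → ℝ) (L : ℝ)
    (v : EuclideanSpace ℝ (Fin n)) : ℝ :=
  max (h v) 0 * L /
    (1 - Real.sqrt (max (ballRadius h L v) 0) / ‖v - ballCenter h L v‖)

/-- Gradient inequality for convex differentiable functions. -/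
lemma grad_ineq {n : ℕ} (h : EuclideanSpace ℝ (Fin n) → ℝ)
    (hconv : ConvexOn ℝ Set.univ h) (hdiff : Differentiable ℝ h)
    (x y : EuclideanSpace ℝ (Fin n)) :
    ⟪gradient h x, y - x⟫ ≤ h y - h x := by
  set φ : ℝ → ℝ := fun t => h (t • (y - x) + x) with hφdef
  have hconvφ : ConvexOn ℝ Set.univ φ := by
    have hc := hconv.comp_affineMap (AffineMap.lineMap x y : ℝ →ᵃ[ℝ] EuclideanSpace ℝ (Fin n))
    have : φ = h ∘ (AffineMap.lineMap x y : ℝ →ᵃ[ℝ] EuclideanSpace ℝ (Fin n)) := by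
      funext t
      simp [hφdef, AffineMap.lineMap_apply]
    rw [this]
    simpa using hc
  have hline : HasDerivAt (fun t : ℝ => t • (y - x) + x) (y - x) 0 := by
    simpa using ((hasDerivAt_id (0 : ℝ)).smul_const (y - x)).add_const x
  have hF : HasFDerivAt h ((InnerProductSpace.toDual ℝ _) (gradient h x))
      ((fun t : ℝ => t • (y - x) + x) 0) := by
    simpa using hasGradientAt_iff_hasFDerivAt.mp (hdiff x).hasGradientAt
  have hφ' : HasDerivAt φ ⟪gradient h x, y - x⟫ 0 := by
    have := hF.comp_hasDerivAt 0 hline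
    rw [InnerProductSpace.toDual_apply_apply] at this
    exact this
  have hs := hconvφ.le_slope_of_hasDerivAt (Set.mem_univ (0 : ℝ)) (Set.mem_univ (1 : ℝ))
    one_pos hφ'
  have hslope : slope φ 0 1 = h y - h x := by
    simp [slope_def_field, hφdef]
  linarith [hs, hslope.le, hslope.ge]

/-- Squared-distance contraction for a metric projection onto a convex set. -/
lemma proj_sq_le {n : ℕ} {Y : Set (EuclideanSpace ℝ (Fin n))} (hYcv : Convex ℝ Y)
    {z p w : EuclideanSpace ℝ (Fin n)} (hp : p ∈ Y) (hw : w ∈ Y)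
    (hproj : ∀ y ∈ Y, ‖z - p‖ ≤ ‖z - y‖) : ‖p - w‖ ^ 2 ≤ ‖z - w‖ ^ 2 := by
  haveI : Nonempty Y := ⟨⟨p, hp⟩⟩
  have hbdd : BddBelow (Set.range fun y : Y => ‖z - y‖) := by
    refine ⟨0, ?_⟩
    rintro _ ⟨y, rfl⟩
    positivity
  have hinf : ‖z - p‖ = ⨅ y : Y, ‖z - (y : EuclideanSpace ℝ (Fin n))‖ :=
    le_antisymm (le_ciInf fun y => hproj y y.2) (ciInf_le hbdd ⟨p, hp⟩)
  have hin : ⟪z - p, w - p⟫ ≤ 0 :=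
    (norm_eq_iInf_iff_real_inner_le_zero hYcv hp).mp hinf w hw
  have hexp : ‖z - w‖ ^ 2 = ‖z - p‖ ^ 2 + 2 * ⟪z - p, p - w⟫ + ‖p - w‖ ^ 2 := by
    have := norm_add_sq_real (z - p) (p - w)
    rw [sub_add_sub_cancel] at this
    exact this
  have hneg : ⟪z - p, p - w⟫ = - ⟪z - p, w - p⟫ := by
    rw [← inner_neg_right]
    congr 1
    abel
  nlinarith [sq_nonneg ‖z - p‖]

theorem stmt_10 {n : ℕ} (h : EuclideanSpace ℝ (Fin n) → ℝ)
    (hconv : ConvexOn ℝ Set.univ h) (hdiff : Differentiable ℝ h)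
    (L : ℝ) (hL : 0 < L)
    (hLip : ∀ x y, ‖gradient h x - gradient h y‖ ≤ L * ‖x - y‖)
    (Y Xstar : Set (EuclideanSpace ℝ (Fin n)))
    (hYne : Y.Nonempty) (hYcl : IsClosed Y) (hYcv : Convex ℝ Y)
    (hXsne : Xstar.Nonempty) (hXscl : IsClosed Xstar) (hXscv : Convex ℝ Xstar)
    (hXsY : Xstar ⊆ Y)
    (v : EuclideanSpace ℝ (Fin n))
    -- `vbar = Π_{X*}(v)` : projection of `v` onto `X*`
    (vbar : EuclideanSpace ℝ (Fin n)) (hvbarmem : vbar ∈ Xstar)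
    (hvbarproj : ∀ y ∈ Xstar, ‖v - vbar‖ ≤ ‖v - y‖)
    (hfeas : h vbar ≤ 0)
    (β : ℝ) (hβ : β ∈ Set.Ioo (0 : ℝ) 1)
    (Bh Mh : ℝ) (hBh : 0 < Bh) (hMh : 0 < Mh)
    (hgradbd : ‖gradient h v‖ ≤ Bh) (hhbd : |h v| ≤ Mh)
    (B2 : ℝ) (hB2 : B2 = max (Bh ^ 2) (Mh * L))
    -- the SMBA feasibility step (division by zero interpreted as zero)
    (z : EuclideanSpace ℝ (Fin n))
    (hz : z = v - (β * (max (h v) 0 / adaptP h L v)) • gradient h v)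
    -- `xplus = Π_Y(z)` : projection of `z` onto `Y`
    (xplus : EuclideanSpace ℝ (Fin n)) (hxpmem : xplus ∈ Y)
    (hxpproj : ∀ y ∈ Y, ‖z - xplus‖ ≤ ‖z - y‖) :
    (infDist xplus Xstar) ^ 2
      ≤ ‖v - vbar‖ ^ 2 - 2 * β * (1 - β) / B2 * (max (h v) 0) ^ 2 := by
  obtain ⟨hβ0, hβ1⟩ := hβ
  have hB2pos : 0 < B2 := by
    rw [hB2]
    exact lt_max_of_lt_left (by positivity)
  -- distance chain
  have hdistsq : infDist xplus Xstar ^ 2 ≤ ‖xplus - vbar‖ ^ 2 := by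
    have h1 : infDist xplus Xstar ≤ ‖xplus - vbar‖ := by
      simpa [dist_eq_norm] using infDist_le_dist_of_mem (x := xplus) hvbarmem
    exact pow_le_pow_left₀ infDist_nonneg h1 2
  have hprojsq : ‖xplus - vbar‖ ^ 2 ≤ ‖z - vbar‖ ^ 2 :=
    proj_sq_le hYcv hxpmem (hXsY hvbarmem) hxpproj
  -- suffices to bound ‖z - vbar‖²
  suffices hmain : ‖z - vbar‖ ^ 2
      ≤ ‖v - vbar‖ ^ 2 - 2 * β * (1 - β) / B2 * (max (h v) 0) ^ 2 by
    linarith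
  set g := gradient h v with hg
  set G := ‖g‖ with hGdef
  set H := h v with hH
  rcases le_or_gt H 0 with hHle | hHpos
  · -- feasible case: z = v
    have hmax : max H 0 = 0 := max_eq_right hHle
    rw [hz, hmax]
    simp
  · -- infeasible case
    have hmax : max H 0 = H := max_eq_left hHpos.le
    -- gradient inequality
    have hgi : ⟪g, vbar - v⟫ ≤ h vbar - H := grad_ineq h hconv hdiff v vbar
    have hgne : g ≠ 0 := by
      intro h0
      rw [h0] at hgi
      simp only [inner_zero_left] at hgi
      linarith
    have hGpos : 0 < G := norm_pos_iff.mpr hgne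
    -- compute ‖v - c_v‖
    have hvc : ‖v - ballCenter h L v‖ = G / L := by
      rw [ballCenter, sub_sub_cancel, norm_smul]
      rw [Real.norm_eq_abs, abs_of_pos (by positivity : (0:ℝ) < 1 / L)]
      rw [← hg, ← hGdef]
      ring
    set p := adaptP h L v with hpdef
    have hR : ballRadius h L v = G ^ 2 / L ^ 2 - 2 * H / L := rfl
    -- bounds on p
    have hpbounds : G ^ 2 ≤ 2 * p ∧ 0 < p ∧ p ≤ B2 := by
      rcases le_or_gt (ballRadius h L v) 0 with hRle | hRpos
      · have hmaxR : max (ballRadius h L v) 0 = 0 := max_eq_right hRle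
        have hpe : p = H * L := by
          rw [hpdef, adaptP, hmaxR, Real.sqrt_zero, zero_div, sub_zero, div_one, ← hH, hmax]
        have hG2 : G ^ 2 ≤ 2 * H * L := by
          rw [hR] at hRle
          have := sub_nonpos.mp hRle
          rw [div_le_div_iff₀ (by positivity) hL] at this
          nlinarith
        have hHM : H ≤ Mh := le_trans (le_abs_self _) hhbd
        refine ⟨by nlinarith, by rw [hpe]; positivity, ?_⟩
        rw [hpe, hB2]
        exact le_max_of_le_right (by nlinarith)
      · have hmaxR : max (ballRadius h L v) 0 = ballRadius h L v := max_eq_left hRpos.le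
        set S := Real.sqrt (G ^ 2 - 2 * H * L) with hSdef
        have hG2HL : 2 * H * L < G ^ 2 := by
          rw [hR] at hRpos
          have := sub_pos.mp hRpos
          rw [div_lt_div_iff₀ hL (by positivity)] at this
          nlinarith
        have hSnonneg : 0 ≤ S := Real.sqrt_nonneg _
        have hSsq : S ^ 2 = G ^ 2 - 2 * H * L := Real.sq_sqrt (by nlinarith)
        have hSG : S < G := by nlinarith
        have hsqrtR : Real.sqrt (ballRadius h L v) = S / L := by
          have : ballRadius h L v = (S / L) ^ 2 := by
            rw [hR, div_pow, hSsq]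
            field_simp
          rw [this, Real.sqrt_sq (by positivity)]
        have hpe : p = H * L / ((G - S) / G) := by
          rw [hpdef, adaptP, hmaxR, hsqrtR, hvc, ← hH, hmax]
          congr 1
          rw [div_div_eq_mul_div, div_mul_cancel₀ _ (ne_of_gt hL)]
          have hGne : G ≠ 0 := ne_of_gt hGpos
          field_simp
        have hGS : 0 < G - S := by linarith
        have hpeq : p = G * (G + S) / 2 := by
          rw [hpe]
          rw [div_div_eq_mul_div]
          rw [div_eq_div_iff (by positivity) (by norm_num)]
          nlinarith
        have hGBh : G ^ 2 ≤ Bh ^ 2 := by nlinarith [hgradbd, norm_nonneg g]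
        refine ⟨by nlinarith, by rw [hpeq]; positivity, ?_⟩
        rw [hB2]
        refine le_max_of_le_left ?_
        nlinarith
    obtain ⟨hp1, hp0, hp2⟩ := hpbounds
    -- the step size
    set t := β * (H / p) with htdef
    have htp : t * p = β * H := by
      rw [htdef]
      field_simp
    have ht0 : 0 ≤ t := by
      rw [htdef]
      positivity
    -- expand the norm
    have hzv : z - vbar = (v - vbar) - t • g := by
      rw [hz, hmax, ← htdef]
      abel
    have hexp : ‖z - vbar‖ ^ 2
        = ‖v - vbar‖ ^ 2 - 2 * (t * ⟪v - vbar, g⟫) + t ^ 2 * G ^ 2 := by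
      rw [hzv, norm_sub_sq_real, real_inner_smul_right, norm_smul, Real.norm_eq_abs,
        mul_pow, sq_abs, ← hGdef]
    have hIH : H ≤ ⟪v - vbar, g⟫ := by
      have hsw : ⟪g, vbar - v⟫ = - ⟪v - vbar, g⟫ := by
        rw [show vbar - v = -(v - vbar) from by abel, inner_neg_right, real_inner_comm]
      rw [hsw] at hgi
      linarith
    clear_value G H p t
    -- key scalar inequality
    have hid : (2 * t * H - t ^ 2 * G ^ 2) * B2 * p ^ 2 - 2 * β * (1 - β) * H ^ 2 * p ^ 2
        = β * H ^ 2 * (β * B2 * (2 * p - G ^ 2) + 2 * (1 - β) * p * (B2 - p)) := by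
      linear_combination (2 * H * p * B2 - G ^ 2 * B2 * (t * p + β * H)) * htp
    have hkey : 2 * β * (1 - β) / B2 * H ^ 2 ≤ 2 * t * H - t ^ 2 * G ^ 2 := by
      rw [div_mul_eq_mul_div, div_le_iff₀ hB2pos]
      have e1 : 0 ≤ β * H ^ 2 * (β * B2 * (2 * p - G ^ 2)) := by
        have : (0:ℝ) ≤ 2 * p - G ^ 2 := by linarith
        positivity
      have e2 : 0 ≤ β * H ^ 2 * (2 * (1 - β) * p * (B2 - p)) := by
        have h1 : (0:ℝ) ≤ 1 - β := by linarith
        have h2 : (0:ℝ) ≤ B2 - p := by linarith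
        positivity
      have hmul : (2 * β * (1 - β) * H ^ 2) * p ^ 2
          ≤ ((2 * t * H - t ^ 2 * G ^ 2) * B2) * p ^ 2 := by linarith
      exact le_of_mul_le_mul_right hmul (pow_pos hp0 2)
    rw [hmax]
    have h2t : t * H ≤ t * ⟪v - vbar, g⟫ := mul_le_mul_of_nonneg_left hIH ht0
    linarith [hexp, hkey, h2t]
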